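/- For a nonzero complex number a and real symmetric data arising from the Levi form: if H is a Hermitian positive definite n×n matrix and S is a complex symmetric n×n matrix, then the real quadratic form q(v) = Re(vᵀ S v) + v* H v on ℂ^n ≅ ℝ^{2n} is positive definite on a real subspace of dimension at least n; equivalently, q cannot be negative semidefinite on any real subspace of dimension > n. -/

import Mathlib

open scoped ComplexOrder

open Matrix Module

noncomputable section Aux19

variable {n : ℕ} (H S : Matrix (Fin n) (Fin n) ℂ)

/-- The real bilinear form underlying q. -/
lemma rsmul_eq19 (c : ℝ) (v : Fin n → ℂ) : c • v = (c : ℂ) • v := by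
  ext i; simp [Complex.real_smul]

def bilin19 : LinearMap.BilinForm ℝ (Fin n → ℂ) :=
  LinearMap.mk₂ ℝ (fun v w => (v ⬝ᵥ S.mulVec w).re + (star v ⬝ᵥ H.mulVec w).re)
    (by intro v v' w; simp only [add_dotProduct, star_add, Complex.add_re]; ring)
    (by
      intro c v w
      rw [rsmul_eq19, star_smul, smul_dotProduct, smul_dotProduct]
      simp only [star_trivial, Complex.star_def, Complex.conj_ofReal, smul_eq_mul,
        Complex.mul_re, Complex.ofReal_re, Complex.ofReal_im]
      ring)
    (by intro v w w'; simp only [mulVec_add, dotProduct_add, Complex.add_re]; ring)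
    (by
      intro c v w
      rw [rsmul_eq19, mulVec_smul, mulVec_smul, dotProduct_smul, dotProduct_smul]
      simp only [smul_eq_mul, Complex.mul_re, Complex.ofReal_re, Complex.ofReal_im]
      ring)

/-- q as a quadratic form over ℝ. -/
def quad19 : QuadraticForm ℝ (Fin n → ℂ) := (bilin19 H S).toQuadraticMap

lemma quad19_apply (v : Fin n → ℂ) :
    quad19 H S v = (v ⬝ᵥ S.mulVec v).re + (star v ⬝ᵥ H.mulVec v).re := rfl

lemma finrank_pi_complex : finrank ℝ (Fin n → ℂ) = 2 * n := by
  simp [Module.finrank_pi_fintype, Complex.finrank_real_complex, two_mul, mul_comm]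

/-- Part 2: no negative-semidefinite subspace of dim > n. -/
lemma part2_19 (hH : H.PosDef) (W : Submodule ℝ (Fin n → ℂ)) (hW : n < finrank ℝ W) :
    ¬ (∀ v ∈ W, (v ⬝ᵥ S.mulVec v).re + (star v ⬝ᵥ H.mulVec v).re ≤ 0) := by
  intro hle
  -- multiplication by I as an ℝ-linear equiv
  let e : (Fin n → ℂ) ≃ₗ[ℝ] (Fin n → ℂ) :=
    (LinearEquiv.smulOfNeZero ℂ (Fin n → ℂ) Complex.I Complex.I_ne_zero).restrictScalars ℝ
  let W' := W.map (e : (Fin n → ℂ) →ₗ[ℝ] (Fin n → ℂ))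
  have hW' : finrank ℝ W' = finrank ℝ W := LinearEquiv.finrank_map_eq e W
  have hsum := Submodule.finrank_sup_add_finrank_inf_eq W W'
  have htop : finrank ℝ (W ⊔ W' : Submodule ℝ (Fin n → ℂ)) ≤ 2 * n := by
    rw [← finrank_pi_complex]; exact Submodule.finrank_le _
  have hInf : 0 < finrank ℝ (W ⊓ W' : Submodule ℝ (Fin n → ℂ)) := by omega
  obtain ⟨v, hv, hv0⟩ : ∃ v ∈ (W ⊓ W' : Submodule ℝ (Fin n → ℂ)), v ≠ 0 := by
    by_contra h
    push_neg at h
    have : (W ⊓ W' : Submodule ℝ (Fin n → ℂ)) = ⊥ := by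
      rw [Submodule.eq_bot_iff]; exact h
    rw [this, finrank_bot] at hInf; omega
  obtain ⟨hvW, hvW'⟩ := hv
  obtain ⟨u, huW, huv⟩ := Submodule.mem_map.mp hvW'
  have huv' : v = Complex.I • u := huv.symm
  have hu0 : u ≠ 0 := by rintro rfl; simp [huv'] at hv0
  have hqv := hle v hvW
  have hqu := hle u huW
  have h1 : v ⬝ᵥ S.mulVec v = -(u ⬝ᵥ S.mulVec u) := by
    rw [huv', smul_dotProduct, mulVec_smul, dotProduct_smul, smul_eq_mul, smul_eq_mul,
      ← mul_assoc, Complex.I_mul_I]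
    ring
  have h2 : star v ⬝ᵥ H.mulVec v = star u ⬝ᵥ H.mulVec u := by
    rw [huv', star_smul, smul_dotProduct, mulVec_smul, dotProduct_smul]
    simp only [Complex.star_def, Complex.conj_I, smul_eq_mul, neg_mul, ← mul_assoc,
      Complex.I_mul_I]
    ring
  have hpos : 0 < (star u ⬝ᵥ H.mulVec u).re := hH.re_dotProduct_pos hu0
  rw [h1, h2] at hqv
  simp only [Complex.neg_re] at hqv
  linarith

lemma span_singles_finrank {m : ℕ} (s : Finset (Fin m)) :
    finrank ℝ (Submodule.span ℝ ((fun i => Pi.single i (1 : ℝ)) '' (s : Set (Fin m)))) = s.card := by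
  have hb : LinearIndependent ℝ (fun i : Fin m => Pi.single i (1 : ℝ)) := by
    rw [Fintype.linearIndependent_iff]
    intro g hg i
    have h := congrFun hg i
    simpa [Finset.sum_apply, Pi.single_apply] using h
  have hli : LinearIndependent ℝ (fun i : s => (Pi.single (i : Fin m) (1 : ℝ) : Fin m → ℝ)) :=
    hb.comp Subtype.val Subtype.val_injective
  have hr : ((fun i => Pi.single i (1 : ℝ)) '' (s : Set (Fin m))) =
      Set.range (fun i : s => (Pi.single (i : Fin m) (1 : ℝ) : Fin m → ℝ)) :=
    Set.image_eq_range _ _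
  rw [hr, finrank_span_eq_card hli, Fintype.card_coe]

lemma span_singles_support {m : ℕ} (s : Finset (Fin m)) {x : Fin m → ℝ}
    (hx : x ∈ Submodule.span ℝ ((fun i => Pi.single i (1 : ℝ)) '' (s : Set (Fin m))))
    {j : Fin m} (hj : j ∉ s) : x j = 0 := by
  have : Submodule.span ℝ ((fun i => Pi.single i (1 : ℝ)) '' (s : Set (Fin m))) ≤
      LinearMap.ker (LinearMap.proj (R := ℝ) (φ := fun _ : Fin m => ℝ) j) := by
    rw [Submodule.span_le]
    rintro _ ⟨i, hi, rfl⟩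
    simp only [SetLike.mem_coe, LinearMap.mem_ker, LinearMap.proj_apply]
    exact Pi.single_eq_of_ne (by rintro rfl; exact hj hi) 1
  simpa using this hx

end Aux19

open Matrix Module in
theorem stmt_19 {n : ℕ} (H S : Matrix (Fin n) (Fin n) ℂ)
    (hH : H.PosDef) (hS : S.IsSymm) :
    (∃ W : Submodule ℝ (Fin n → ℂ), n ≤ Module.finrank ℝ W ∧
      ∀ v ∈ W, v ≠ 0 →
        0 < (dotProduct v (S.mulVec v)).re +
            (dotProduct (star v) (H.mulVec v)).re) ∧
    (∀ W : Submodule ℝ (Fin n → ℂ), n < Module.finrank ℝ W →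
      ¬ (∀ v ∈ W,
        (dotProduct v (S.mulVec v)).re +
          (dotProduct (star v) (H.mulVec v)).re ≤ 0)) := by
  refine ⟨?_, fun W hW => part2_19 H S hH W hW⟩
  -- diagonalize the quadratic form
  obtain ⟨w, ⟨iso⟩⟩ := (quad19 H S).equivalent_weightedSumSquares
  have hm2 : finrank ℝ (Fin n → ℂ) = 2 * n := finrank_pi_complex
  let L := iso.toLinearEquiv
  have happ : ∀ v, quad19 H S v = ∑ i, w i * (L v i * L v i) := by
    intro v
    rw [← iso.map_app v, QuadraticMap.weightedSumSquares_apply]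
    simp only [smul_eq_mul]
    rfl
  classical
  let P : Finset (Fin (finrank ℝ (Fin n → ℂ))) := Finset.univ.filter fun i => 0 < w i
  -- the negative part has card ≤ n
  have hPc : Pᶜ.card ≤ n := by
    by_contra hc
    push_neg at hc
    set V : Submodule ℝ (Fin n → ℂ) :=
      (Submodule.span ℝ ((fun i => Pi.single i (1 : ℝ)) '' (↑(Pᶜ) :
        Set (Fin (finrank ℝ (Fin n → ℂ)))))).map (L.symm : (Fin (finrank ℝ (Fin n → ℂ)) → ℝ) →ₗ[ℝ] (Fin n → ℂ)) with hV
    have hVrank : finrank ℝ V = Pᶜ.card := by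
      rw [hV, L.symm.finrank_map_eq, span_singles_finrank]
    refine part2_19 H S hH V (by omega) ?_
    intro v hv
    rw [← quad19_apply, happ v]
    obtain ⟨x, hx, rfl⟩ := Submodule.mem_map.mp hv
    simp only [LinearEquiv.coe_coe, L.apply_symm_apply]
    apply Finset.sum_nonpos
    intro i _
    by_cases hi : i ∈ Pᶜ
    · have hw : w i ≤ 0 := by simpa [P, not_lt] using hi
      nlinarith [mul_self_nonneg (x i)]
    · rw [span_singles_support _ hx hi]; ring_nf; simp
  have hPcard : n ≤ P.card := by
    have h2 := Finset.card_compl_add_card P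
    simp only [Fintype.card_fin, hm2] at h2
    omega
  -- the positive subspace
  refine ⟨(Submodule.span ℝ ((fun i => Pi.single i (1 : ℝ)) ''
      (P : Set (Fin (finrank ℝ (Fin n → ℂ)))))).map (L.symm : (Fin (finrank ℝ (Fin n → ℂ)) → ℝ) →ₗ[ℝ] (Fin n → ℂ)), ?_, ?_⟩
  · rw [L.symm.finrank_map_eq, span_singles_finrank]; exact hPcard
  · intro v hv hv0
    rw [← quad19_apply, happ v]
    obtain ⟨x, hx, rfl⟩ := Submodule.mem_map.mp hv
    simp only [LinearEquiv.coe_coe, L.apply_symm_apply]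
    have hx0 : x ≠ 0 := by
      intro h; apply hv0; rw [h]; simp
    obtain ⟨j, hj⟩ : ∃ j, x j ≠ 0 := by
      by_contra h; push_neg at h; exact hx0 (funext h)
    have hjP : j ∈ P := by
      by_contra hjP
      exact hj (span_singles_support _ hx (by simpa using hjP))
    apply Finset.sum_pos'
    · intro i _
      by_cases hi : i ∈ P
      · have : 0 < w i := by simpa [P] using hi
        nlinarith [mul_self_nonneg (x i)]
      · rw [span_singles_support _ hx (by simpa using hi)]; ring_nf; simp
    · refine ⟨j, Finset.mem_univ j, ?_⟩
      have hwj : 0 < w j := by simpa [P] using hjP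
      have : 0 < x j * x j := mul_self_pos.mpr hj
      positivity
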